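/- If F is a union-closed family of sets and x ∈ U_F, then every member of F_x covers at most one member of F_x^c in the inclusion order on F. -/
import Mathlib

/-- If `F` is union-closed and `x ∈ U_F`, then every member of `F_x` covers at
most one member of `F_x^c` in the inclusion order on `F`. -/
theorem stmt_12 {α : Type*} (F : Set (Set α))
    (hUC : ∀ A ∈ F, ∀ B ∈ F, A ∪ B ∈ F)
    (x : α) (hx : x ∈ ⋃₀ F) :
    ∀ B ∈ F, x ∈ B →
      ∀ A₁ ∈ F, x ∉ A₁ → ∀ A₂ ∈ F, x ∉ A₂ →
        (A₁ ⊂ B ∧ ∀ C ∈ F, A₁ ⊂ C → C ⊂ B → False) →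
        (A₂ ⊂ B ∧ ∀ C ∈ F, A₂ ⊂ C → C ⊂ B → False) →
        A₁ = A₂ := by
  intro B hB hxB A₁ hA₁ hx₁ A₂ hA₂ hx₂ h₁ h₂
  have hU : A₁ ∪ A₂ ∈ F := hUC _ hA₁ _ hA₂
  have hxU : x ∉ A₁ ∪ A₂ := by simp [hx₁, hx₂]
  have hUB : A₁ ∪ A₂ ⊂ B := by
    constructor
    · exact Set.union_subset h₁.1.1 h₂.1.1
    · intro h; exact hxU (h hxB)
  have e₁ : A₁ ∪ A₂ = A₁ := by
    by_contra h
    exact h₁.2 _ hU ⟨Set.subset_union_left, fun hc => h (Set.Subset.antisymm hc Set.subset_union_left)⟩ hUB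
  have e₂ : A₁ ∪ A₂ = A₂ := by
    by_contra h
    exact h₂.2 _ hU ⟨Set.subset_union_right, fun hc => h (Set.Subset.antisymm hc Set.subset_union_right)⟩ hUB
  exact e₁.symm.trans e₂
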